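/- Let n ≥ 3 and let G be a graph with χ(G) = ω(G) (e.g., a perfect graph). Then G is K_n-WORM colorable if and only if ω(G) ≤ (n-1)^2. -/

import Mathlib

open SimpleGraph

/-- A vertex coloring `c` is a `K_n`-WORM coloring of `G` if no set of `n`
pairwise adjacent vertices is monochromatic and none is rainbow. -/
def IsKnWORM {β : Type*} (G : SimpleGraph β) (n : ℕ) (c : β → ℕ) : Prop :=
  ∀ s : Finset β, G.IsNClique n s →
    (∃ u ∈ s, ∃ v ∈ s, c u ≠ c v) ∧ (∃ u ∈ s, ∃ v ∈ s, u ≠ v ∧ c u = c v)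

/-- Let `n ≥ 3` and `G` a graph with `χ(G) = ω(G)`. Then `G` is `K_n`-WORM
colorable if and only if `ω(G) ≤ (n-1)^2`. -/
theorem stmt5 {β : Type} [Fintype β] (G : SimpleGraph β) (n : ℕ) (hn : 3 ≤ n)
    (hperf : G.chromaticNumber = (G.cliqueNum : ℕ∞)) :
    (∃ c : β → ℕ, IsKnWORM G n c) ↔ G.cliqueNum ≤ (n - 1) ^ 2 := by
  classical
  have hn1 : 0 < n - 1 := by omega
  constructor
  · rintro ⟨c, hc⟩
    by_contra h
    push_neg at h
    obtain ⟨t, ht⟩ := G.exists_isNClique_cliqueNum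
    obtain ⟨t', ht't, ht'card⟩ := Finset.exists_subset_card_eq (s := t) (n := (n - 1) ^ 2 + 1)
      (by rw [ht.card_eq]; omega)
    have ht'clique : G.IsClique t' := ht.isClique.subset ht't
    by_cases hb : ∃ a, n ≤ (t'.filter (fun v => c v = a)).card
    · obtain ⟨a, ha⟩ := hb
      obtain ⟨u, hu, hucard⟩ := Finset.exists_subset_card_eq (n := n) ha
      have hclique : G.IsNClique n u :=
        ⟨ht'clique.subset (hu.trans (Finset.filter_subset _ _)), hucard⟩
      obtain ⟨⟨x, hx, y, hy, hxy⟩, -⟩ := hc u hclique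
      have hx' := (Finset.mem_filter.1 (hu hx)).2
      have hy' := (Finset.mem_filter.1 (hu hy)).2
      exact hxy (hx'.trans hy'.symm)
    · push_neg at hb
      have hI : n ≤ (t'.image c).card := by
        by_contra hI
        push_neg at hI
        have h1 : t'.card ≤ (n - 1) * (t'.image c).card :=
          Finset.card_le_mul_card_image t' (n - 1) (fun b _ => by
            have := hb b; omega)
        have h2 : (n - 1) * (t'.image c).card ≤ (n - 1) * (n - 1) :=
          Nat.mul_le_mul_left _ (by omega)
        rw [ht'card] at h1
        have : (n - 1) ^ 2 = (n - 1) * (n - 1) := sq (n - 1)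
        omega
      obtain ⟨J, hJ, hJcard⟩ := Finset.exists_subset_card_eq (n := n) hI
      have hrep : ∀ a ∈ J, ∃ v ∈ t', c v = a := by
        intro a ha
        exact Finset.mem_image.1 (hJ ha)
      choose f hf1 hf2 using hrep
      set u : Finset β := J.attach.image (fun a => f a.1 a.2) with hu
      have husub : u ⊆ t' := by
        intro x hx
        obtain ⟨a, -, rfl⟩ := Finset.mem_image.1 hx
        exact hf1 a.1 a.2
      have hucard : u.card = n := by
        rw [hu, Finset.card_image_of_injOn, Finset.card_attach, hJcard]
        intro a _ b _ hab
        have : a.1 = b.1 := by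
          rw [← hf2 a.1 a.2, ← hf2 b.1 b.2]
          exact congrArg c hab
        exact Subtype.ext this
      obtain ⟨-, x, hx, y, hy, hxy, hcxy⟩ := hc u ⟨ht'clique.subset husub, hucard⟩
      obtain ⟨a, -, rfl⟩ := Finset.mem_image.1 hx
      obtain ⟨b, -, rfl⟩ := Finset.mem_image.1 hy
      have : a.1 = b.1 := by rw [← hf2 a.1 a.2, ← hf2 b.1 b.2, hcxy]
      exact hxy (congrArg (fun p => f p.1 p.2) (Subtype.ext this : a = b))
  · intro hω
    have hpos : 0 < (n - 1) ^ 2 := by positivity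
    have hcol : G.Colorable ((n - 1) ^ 2) := by
      rw [← chromaticNumber_le_iff_colorable, hperf]
      exact_mod_cast hω
    obtain ⟨C⟩ := hcol
    refine ⟨fun v => (C v : ℕ) / (n - 1), fun s hs => ?_⟩
    have hinj : Set.InjOn (fun v => ((C v : ℕ))) s := by
      intro x hx y hy hxy
      by_contra hne
      exact C.valid (hs.isClique hx hy hne) (Fin.ext hxy)
    constructor
    · by_contra hmono
      push_neg at hmono
      have hne : s.Nonempty := Finset.card_pos.1 (by rw [hs.card_eq]; omega)
      obtain ⟨v0, hv0⟩ := hne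
      set k := (C v0 : ℕ) / (n - 1) with hk
      have hmaps : ∀ v ∈ s, (C v : ℕ) ∈ Finset.Ico (k * (n - 1)) (k * (n - 1) + (n - 1)) := by
        intro v hv
        have hdiv : (C v : ℕ) / (n - 1) = k := hmono v hv v0 hv0
        have h1 : k * (n - 1) ≤ (C v : ℕ) := by
          rw [← hdiv]; exact Nat.div_mul_le_self _ _
        have h2 : (C v : ℕ) < (k + 1) * (n - 1) :=
          (Nat.div_lt_iff_lt_mul hn1).mp (by omega)
        rw [Finset.mem_Ico]
        constructor
        · exact h1
        · have : (k + 1) * (n - 1) = k * (n - 1) + (n - 1) := by ring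
          omega
      have hcard := Finset.card_le_card_of_injOn _ hmaps hinj
      rw [hs.card_eq, Nat.card_Ico] at hcard
      omega
    · have hlt : ∀ v ∈ s, (C v : ℕ) / (n - 1) ∈ Finset.range (n - 1) := by
        intro v _
        rw [Finset.mem_range, Nat.div_lt_iff_lt_mul hn1]
        have : (C v : ℕ) < (n - 1) ^ 2 := (C v).2
        have hsq : (n - 1) ^ 2 = (n - 1) * (n - 1) := sq (n - 1)
        omega
      have hcard : (Finset.range (n - 1)).card < s.card := by
        rw [Finset.card_range, hs.card_eq]; omega
      obtain ⟨x, hx, y, hy, hxy, hcxy⟩ :=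
        Finset.exists_ne_map_eq_of_card_lt_of_maps_to hcard hlt
      exact ⟨x, hx, y, hy, hxy, hcxy⟩
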